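/- Let $d_1 < d_2 < \cdots < d_s < \tau_0$ be reals and $K_i = \prod_{j \neq i}(d_j - \tau_0)/(d_j - d_i)$. Then $|K_1| < |K_2|$. -/

import Mathlib

theorem stmt_4 (s : ℕ) (hs : 2 ≤ s) (d : Fin s → ℝ) (τ₀ : ℝ)
    (hmono : ∀ i j : Fin s, i < j → d i < d j)
    (hτ : ∀ i, d i < τ₀)
    (K : Fin s → ℝ)
    (hK : ∀ i, K i = ∏ j ∈ Finset.univ.erase i, (d j - τ₀) / (d j - d i)) :
    |K ⟨0, by omega⟩| < |K ⟨1, by omega⟩| := by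
  set i0 : Fin s := ⟨0, by omega⟩ with hi0
  set i1 : Fin s := ⟨1, by omega⟩ with hi1
  have hne : i0 ≠ i1 := by simp [hi0, hi1, Fin.ext_iff]
  have h01 : d i0 < d i1 := hmono i0 i1 (by simp [hi0, hi1, Fin.lt_def])
  set S : Finset (Fin s) := (Finset.univ.erase i0).erase i1 with hS
  have hmem1 : i1 ∉ S := Finset.notMem_erase _ _
  have hmem0 : i0 ∉ S := by
    rw [hS, Finset.erase_right_comm]; exact Finset.notMem_erase _ _
  have e0 : Finset.univ.erase i0 = insert i1 S := by
    rw [hS, Finset.insert_erase (Finset.mem_erase.2 ⟨hne.symm, Finset.mem_univ _⟩)]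
  have e1 : Finset.univ.erase i1 = insert i0 S := by
    rw [hS, Finset.erase_right_comm,
      Finset.insert_erase (Finset.mem_erase.2 ⟨hne, Finset.mem_univ _⟩)]
  have hSj : ∀ j ∈ S, d i1 < d j := by
    intro j hj
    have hj1 : j ≠ i1 := Finset.ne_of_mem_erase hj
    have hj0 : j ≠ i0 := Finset.ne_of_mem_erase (Finset.mem_of_mem_erase hj)
    refine hmono i1 j ?_
    rw [Fin.lt_def]
    simp only [hi1]
    rcases Nat.lt_or_ge 1 j.val with h | h
    · exact h
    · exfalso
      interval_cases h' : j.val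
      · exact hj0 (Fin.ext (by simpa using h'))
      · exact hj1 (Fin.ext (by simpa using h'))
  have habs : ∀ x y : ℝ, x < y → y < τ₀ → |(y - τ₀) / (y - x)| = (τ₀ - y) / (y - x) := by
    intro x y h1 h2
    rw [abs_div, abs_of_neg (by linarith), abs_of_pos (by linarith), neg_sub]
  have habs2 : |(d i0 - τ₀) / (d i0 - d i1)| = (τ₀ - d i0) / (d i1 - d i0) := by
    rw [abs_div, abs_of_neg (by have := hτ i0; linarith), abs_of_neg (by linarith),
      neg_sub, neg_sub]
  rw [hK, hK, Finset.abs_prod, Finset.abs_prod, e0, e1,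
    Finset.prod_insert hmem1, Finset.prod_insert hmem0,
    habs (d i0) (d i1) h01 (hτ i1), habs2]
  have hprodeq : ∀ j ∈ S, |(d j - τ₀) / (d j - d i0)| = (τ₀ - d j) / (d j - d i0) := by
    intro j hj; exact habs _ _ (lt_trans h01 (hSj j hj)) (hτ j)
  have hprodeq' : ∀ j ∈ S, |(d j - τ₀) / (d j - d i1)| = (τ₀ - d j) / (d j - d i1) := by
    intro j hj; exact habs _ _ (hSj j hj) (hτ j)
  rw [Finset.prod_congr rfl hprodeq, Finset.prod_congr rfl hprodeq']
  apply mul_lt_mul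
  · have h0 := hτ i0
    apply div_lt_div_of_pos_right (by linarith) (by linarith)
  · apply Finset.prod_le_prod
    · intro j hj
      have h1 := hSj j hj
      have h2 := hτ j
      exact div_nonneg (by linarith) (by linarith)
    · intro j hj
      have h1 := hSj j hj
      have h2 := hτ j
      gcongr <;> linarith
  · apply Finset.prod_pos
    intro j hj
    have h1 := hSj j hj
    have h2 := hτ j
    exact div_pos (by linarith) (by linarith)
  · have h0 := hτ i0
    exact div_nonneg (by linarith) (by linarith)
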